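/- Let p:[n]→ℝ² be injective with ‖p(i)‖=1 for all i and Σᵢ p(i)=0. Then L(K_n,p) = (n/2)I + (1/2)(ppᵀ - xxᵀ - yyᵀ - rrᵀ), where p∈ℝ^{2n} is the concatenation of the p(i), x=(1,0,1,0,…,1,0)ᵀ, y=(0,1,0,1,…,0,1)ᵀ, and r is the concatenation of p^⊥(i)=(-p_y(i),p_x(i)). -/

import Mathlib

open Matrix

noncomputable section

def euclidNorm {d : ℕ} (v : Fin d → ℝ) : ℝ := Real.sqrt (∑ i, v i ^ 2)

def dvec {n d : ℕ} (p : Fin n → Fin d → ℝ) (i j : Fin n) : Fin d → ℝ :=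
  if p i = p j then 0 else (euclidNorm (p i - p j))⁻¹ • (p i - p j)

abbrev EdgeIdx {n : ℕ} (G : SimpleGraph (Fin n)) [DecidableRel G.Adj] : Type :=
  {e : Fin n × Fin n // e.1 < e.2 ∧ G.Adj e.1 e.2}

def rigidity {n d : ℕ} (G : SimpleGraph (Fin n)) [DecidableRel G.Adj]
    (p : Fin n → Fin d → ℝ) : Matrix (Fin n × Fin d) (EdgeIdx G) ℝ :=
  fun v e => ((if v.1 = e.1.1 then (1:ℝ) else 0) - (if v.1 = e.1.2 then 1 else 0))
      * dvec p e.1.1 e.1.2 v.2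

def stiffness {n d : ℕ} (G : SimpleGraph (Fin n)) [DecidableRel G.Adj]
    (p : Fin n → Fin d → ℝ) : Matrix (Fin n × Fin d) (Fin n × Fin d) ℝ :=
  rigidity G p * (rigidity G p)ᴴ

def lowerStiffness {n d : ℕ} (G : SimpleGraph (Fin n)) [DecidableRel G.Adj]
    (p : Fin n → Fin d → ℝ) : Matrix (EdgeIdx G) (EdgeIdx G) ℝ :=
  (rigidity G p)ᴴ * rigidity G p

theorem stiffness_isHermitian {n d : ℕ} (G : SimpleGraph (Fin n)) [DecidableRel G.Adj]
    (p : Fin n → Fin d → ℝ) : (stiffness G p).IsHermitian :=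
  Matrix.isHermitian_mul_conjTranspose_self _

def eigs {m : Type*} [Fintype m] [DecidableEq m] (A : Matrix m m ℝ)
    (hA : A.IsHermitian) : Multiset ℝ :=
  Finset.univ.val.map hA.eigenvalues

def ascEigs {m : Type*} [Fintype m] [DecidableEq m] (A : Matrix m m ℝ)
    (hA : A.IsHermitian) : List ℝ :=
  (eigs A hA).sort (· ≤ ·)

def nthSmallest {m : Type*} [Fintype m] [DecidableEq m] (A : Matrix m m ℝ)
    (hA : A.IsHermitian) (k : ℕ) : ℝ :=
  (ascEigs A hA).getD (k-1) 0

section helpers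

lemma dvec_self' {n d : ℕ} (p : Fin n → Fin d → ℝ) (i : Fin n) : dvec p i i = 0 := by
  simp [dvec]

lemma enorm_neg' {d : ℕ} (v : Fin d → ℝ) : euclidNorm (-v) = euclidNorm v := by
  simp [euclidNorm]

lemma dvec_symm' {n d : ℕ} (p : Fin n → Fin d → ℝ) (i j : Fin n) :
    dvec p j i = -dvec p i j := by
  unfold dvec
  by_cases h : p i = p j
  · simp [h]
  · rw [if_neg (Ne.symm h), if_neg h]
    have : p j - p i = -(p i - p j) := by ring
    rw [this, enorm_neg']
    ext a
    simp only [Pi.smul_apply, Pi.sub_apply, Pi.neg_apply, smul_eq_mul]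
    ring

lemma key_scalar {n : ℕ} (p : Fin n → Fin 2 → ℝ) (i j : Fin n) (hne : p i ≠ p j)
    (hni : p i 0 ^ 2 + p i 1 ^ 2 = 1) (hnj : p j 0 ^ 2 + p j 1 ^ 2 = 1) (a b : Fin 2) :
    dvec p i j a * dvec p i j b =
      (1/2) * ((if a = b then (1:ℝ) else 0)
        + (if a = 0 then -(p i 1) else p i 0) * (if b = 0 then -(p j 1) else p j 0)
        - p i a * p j b) := by
  unfold dvec
  rw [if_neg hne]
  set s := euclidNorm (p i - p j) with hs
  have hs2 : s ^ 2 = (p i 0 - p j 0) ^ 2 + (p i 1 - p j 1) ^ 2 := by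
    rw [hs]
    unfold euclidNorm
    rw [Real.sq_sqrt (by positivity)]
    simp [Fin.sum_univ_two]
  have hS : (p i 0 - p j 0) ^ 2 + (p i 1 - p j 1) ^ 2
      = 2 - 2 * (p i 0 * p j 0 + p i 1 * p j 1) := by linear_combination hni + hnj
  have h0 : ¬(p i 0 - p j 0 = 0 ∧ p i 1 - p j 1 = 0) := by
    rintro ⟨h1, h2⟩
    apply hne
    funext c
    fin_cases c
    · exact sub_eq_zero.mp h1
    · exact sub_eq_zero.mp h2
  have hpos : 0 < s ^ 2 := by
    rw [hs2]
    rcases not_and_or.mp h0 with h | h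
    · nlinarith [sq_nonneg (p i 1 - p j 1), sq_pos_of_ne_zero h]
    · nlinarith [sq_nonneg (p i 0 - p j 0), sq_pos_of_ne_zero h]
  have hsne : s ≠ 0 := by intro h; rw [h] at hpos; simp at hpos
  have hmain : (p i a - p j a) * (p i b - p j b) =
      (1/2) * ((if a = b then (1:ℝ) else 0)
        + (if a = 0 then -(p i 1) else p i 0) * (if b = 0 then -(p j 1) else p j 0)
        - p i a * p j b) * s ^ 2 := by
    rw [hs2, hS]
    fin_cases a <;> fin_cases b <;>
      simp only [if_true, if_false, Fin.isValue, reduceIte, Fin.mk_one, Fin.zero_eta,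
        one_ne_zero, Fin.ext_iff, Fin.val_zero, Fin.val_one, zero_ne_one]
    · linear_combination (p j 1 ^ 2) * hni + (1 - p i 0 ^ 2) * hnj
    · linear_combination (-(p j 0 * p j 1)) * hni + (-(p i 0 * p i 1)) * hnj
    · linear_combination (-(p j 0 * p j 1)) * hni + (-(p i 0 * p i 1)) * hnj
    · linear_combination (p j 0 ^ 2) * hni + (1 - p i 1 ^ 2) * hnj
  have hd : (s⁻¹ • (p i - p j)) a * (s⁻¹ • (p i - p j)) b
      = (p i a - p j a) * (p i b - p j b) / s ^ 2 := by
    simp only [Pi.smul_apply, Pi.sub_apply, smul_eq_mul]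
    rw [eq_div_iff (pow_ne_zero 2 hsne)]
    field_simp
  rw [hd, hmain, mul_div_assoc, div_self (pow_ne_zero 2 hsne), mul_one]

lemma half_sum {n : ℕ} (g : Fin n → Fin n → ℝ) (hsymm : ∀ u v, g u v = g v u)
    (hdiag : ∀ u, g u u = 0) :
    ∑ e ∈ Finset.univ.filter (fun e : Fin n × Fin n => e.1 < e.2), g e.1 e.2
      = (∑ u, ∑ v, g u v) / 2 := by
  have hswap : ∑ e ∈ Finset.univ.filter (fun e : Fin n × Fin n => e.2 < e.1), g e.1 e.2
      = ∑ e ∈ Finset.univ.filter (fun e : Fin n × Fin n => e.1 < e.2), g e.1 e.2 := by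
    apply Finset.sum_nbij' (fun e => Prod.swap e) (fun e => Prod.swap e) <;>
      simp [Finset.mem_filter, hsymm]
  have htot : (∑ u, ∑ v, g u v)
      = ∑ e ∈ Finset.univ.filter (fun e : Fin n × Fin n => e.1 < e.2), g e.1 e.2
      + ∑ e ∈ Finset.univ.filter (fun e : Fin n × Fin n => ¬ e.1 < e.2), g e.1 e.2 := by
    rw [← Finset.sum_product']
    exact (Finset.sum_filter_add_sum_filter_not _ _ _).symm
  have hnot : ∑ e ∈ Finset.univ.filter (fun e : Fin n × Fin n => ¬ e.1 < e.2), g e.1 e.2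
      = ∑ e ∈ Finset.univ.filter (fun e : Fin n × Fin n => e.2 < e.1), g e.1 e.2 := by
    refine (Finset.sum_subset ?_ ?_).symm
    · intro e he
      simp only [Finset.mem_filter, Finset.mem_univ, true_and] at he ⊢
      exact not_lt_of_gt he
    · intro e he hne
      simp only [Finset.mem_filter, Finset.mem_univ, true_and, not_lt] at he hne
      have : e.1 = e.2 := le_antisymm hne he
      rw [← this, hdiag]
  rw [htot, hnot, hswap]
  ring

lemma delta_sum {n : ℕ} (f : Fin n → Fin n → ℝ) (hsymm : ∀ u v, f u v = f v u)
    (i j : Fin n) :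
    ∑ u, ∑ v, ((if i = u then (1:ℝ) else 0) - if i = v then 1 else 0)
        * ((if j = u then (1:ℝ) else 0) - if j = v then 1 else 0) * f u v
      = (if i = j then 2 * ∑ k, f i k else 0) - 2 * f i j := by
  have expand : ∀ u v : Fin n,
      ((if i = u then (1:ℝ) else 0) - if i = v then 1 else 0)
        * ((if j = u then (1:ℝ) else 0) - if j = v then 1 else 0) * f u v
      = ((if i = u then (if j = u then f u v else 0) else 0)
          + (if i = v then (if j = v then f u v else 0) else 0))
        - ((if i = u then (if j = v then f u v else 0) else 0)
          + (if i = v then (if j = u then f u v else 0) else 0)) := by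
    intro u v; split_ifs <;> ring
  simp only [expand, Finset.sum_sub_distrib, Finset.sum_add_distrib]
  have A : ∑ u, ∑ v, (if i = u then (if j = u then f u v else 0) else 0)
      = if i = j then ∑ k, f i k else 0 := by
    simp only [Finset.sum_ite_irrel, Finset.sum_const_zero, Finset.sum_ite_eq,
      Finset.mem_univ, if_true]
    by_cases h : i = j
    · subst h; simp
    · rw [if_neg h, if_neg (Ne.symm h)]
  have B : ∑ u, ∑ v, (if i = v then (if j = v then f u v else 0) else 0)
      = if i = j then ∑ k, f i k else 0 := by
    simp only [Finset.sum_ite_eq, Finset.mem_univ, if_true]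
    simp only [Finset.sum_ite_irrel, Finset.sum_const_zero]
    by_cases h : i = j
    · subst h; simp only [if_true]
      exact Finset.sum_congr rfl fun u _ => hsymm u i
    · rw [if_neg h, if_neg (Ne.symm h)]
  have C : ∑ u, ∑ v, (if i = u then (if j = v then f u v else 0) else 0)
      = f i j := by
    simp [Finset.sum_ite_eq, Finset.sum_ite_irrel]
  have D : ∑ u, ∑ v, (if i = v then (if j = u then f u v else 0) else 0)
      = f i j := by
    have h1 : ∀ u, ∑ v, (if i = v then (if j = u then f u v else 0) else 0)
        = if j = u then f u i else 0 := by
      intro u; rw [Finset.sum_ite_eq]; simp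
    simp only [h1, Finset.sum_ite_eq, Finset.mem_univ, if_true]
    exact hsymm j i
  rw [A, B, C, D]
  by_cases h : i = j <;> simp [h] <;> ring

end helpers

/-- For injective `p : [n] → ℝ²` with all points on the unit circle summing to
zero: `L(K_n,p) = (n/2)I + (1/2)(ppᵀ - xxᵀ - yyᵀ - rrᵀ)`, where `p ∈ ℝ^{2n}`
is the concatenation of the `p(i)`, `x = (1,0,1,0,…)ᵀ`, `y = (0,1,0,1,…)ᵀ`,
and `r` is the concatenation of the vectors `p^⊥(i) = (-p_y(i), p_x(i))`. -/
theorem circle_stiffness_formula (n : ℕ) (p : Fin n → Fin 2 → ℝ)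
    (hinj : Function.Injective p)
    (hnorm : ∀ i, euclidNorm (p i) = 1) (hsum : ∑ i, p i = 0) :
    stiffness (⊤ : SimpleGraph (Fin n)) p =
      ((n : ℝ)/2) • (1 : Matrix (Fin n × Fin 2) (Fin n × Fin 2) ℝ) +
      (1/2 : ℝ) •
        (Matrix.vecMulVec (fun v : Fin n × Fin 2 => p v.1 v.2)
            (fun v : Fin n × Fin 2 => p v.1 v.2) -
         Matrix.vecMulVec (fun v : Fin n × Fin 2 => if v.2 = 0 then (1:ℝ) else 0)
            (fun v : Fin n × Fin 2 => if v.2 = 0 then (1:ℝ) else 0) -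
         Matrix.vecMulVec (fun v : Fin n × Fin 2 => if v.2 = 1 then (1:ℝ) else 0)
            (fun v : Fin n × Fin 2 => if v.2 = 1 then (1:ℝ) else 0) -
         Matrix.vecMulVec (fun v : Fin n × Fin 2 => if v.2 = 0 then -(p v.1 1) else p v.1 0)
            (fun v : Fin n × Fin 2 => if v.2 = 0 then -(p v.1 1) else p v.1 0)) := by
  -- unit norm in coordinates
  have hunit : ∀ i, p i 0 ^ 2 + p i 1 ^ 2 = 1 := by
    intro i
    have h := hnorm i
    unfold euclidNorm at h
    have h2 : (∑ a, p i a ^ 2) = 1 := Real.sqrt_eq_one.mp h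
    simpa [Fin.sum_univ_two] using h2
  have hsum0 : ∀ c, ∑ k, p k c = 0 := by
    intro c
    have := congrFun hsum c
    simpa using this
  ext ⟨i, a⟩ ⟨j, b⟩
  -- the symmetric kernel
  set f : Fin n → Fin n → ℝ := fun u v => dvec p u v a * dvec p u v b with hf
  have hfsymm : ∀ u v, f u v = f v u := by
    intro u v; simp only [hf, dvec_symm' p u v, Pi.neg_apply]; ring
  have hfdiag : ∀ u, f u u = 0 := by intro u; simp [hf, dvec_self']
  -- step 1: LHS entry as sum over filter
  have lhs1 : stiffness (⊤ : SimpleGraph (Fin n)) p (i, a) (j, b)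
      = ∑ e ∈ Finset.univ.filter (fun e : Fin n × Fin n => e.1 < e.2),
          ((if i = e.1 then (1:ℝ) else 0) - if i = e.2 then 1 else 0)
            * ((if j = e.1 then (1:ℝ) else 0) - if j = e.2 then 1 else 0) * f e.1 e.2 := by
    rw [stiffness, Matrix.mul_apply]
    rw [Finset.sum_subtype (Finset.univ.filter (fun e : Fin n × Fin n => e.1 < e.2))
      (p := fun e : Fin n × Fin n => e.1 < e.2 ∧ (⊤ : SimpleGraph (Fin n)).Adj e.1 e.2)
      (f := fun e : Fin n × Fin n =>
          ((if i = e.1 then (1:ℝ) else 0) - if i = e.2 then 1 else 0)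
            * ((if j = e.1 then (1:ℝ) else 0) - if j = e.2 then 1 else 0) * f e.1 e.2)]
    · apply Finset.sum_congr rfl
      intro e _
      simp only [rigidity, Matrix.conjTranspose_apply, star_trivial, hf]
      ring
    · intro e
      simp only [Finset.mem_filter, Finset.mem_univ, true_and, SimpleGraph.top_adj]
      exact ⟨fun h => ⟨h, ne_of_lt h⟩, fun h => h.1⟩
  rw [lhs1, half_sum (fun u v => ((if i = u then (1:ℝ) else 0) - if i = v then 1 else 0)
      * ((if j = u then (1:ℝ) else 0) - if j = v then 1 else 0) * f u v)
      (by intro u v; rw [hfsymm u v]; ring) (by intro u; rw [hfdiag u]; ring),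
    delta_sum f hfsymm i j]
  -- RHS entry
  simp only [Matrix.add_apply, Matrix.smul_apply, Matrix.sub_apply, Matrix.vecMulVec_apply,
    Matrix.one_apply, smul_eq_mul, Prod.mk.injEq]
  have hdelta : (if a = b then (1:ℝ) else 0)
      = (if a = 0 then (1:ℝ) else 0) * (if b = 0 then 1 else 0)
        + (if a = 1 then (1:ℝ) else 0) * (if b = 1 then 1 else 0) := by
    fin_cases a <;> fin_cases b <;> norm_num
  by_cases hij : i = j
  · subst hij
    rw [if_pos rfl]
    simp only [eq_self_iff_true, true_and]
    have hF : ∀ k, f i k = (1/2) * ((if a = b then (1:ℝ) else 0)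
        + (if a = 0 then -(p i 1) else p i 0) * (if b = 0 then -(p k 1) else p k 0)
        - p i a * p k b)
        - (if k = i then (1/2) * ((if a = b then (1:ℝ) else 0)
        + (if a = 0 then -(p i 1) else p i 0) * (if b = 0 then -(p i 1) else p i 0)
        - p i a * p i b) else 0) := by
      intro k
      by_cases hk : k = i
      · subst hk; rw [if_pos rfl, hfdiag]; ring
      · rw [if_neg hk]
        simp only [hf]
        rw [key_scalar p i k (fun hpe => hk ((hinj hpe).symm)) (hunit i) (hunit k) a b]
        ring
    have hq : ∑ k, (if b = 0 then -(p k 1) else p k 0) = 0 := by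
      by_cases hb : b = 0
      · simp only [hb, if_true]
        rw [Finset.sum_neg_distrib, hsum0 1, neg_zero]
      · simp only [hb, if_false]; exact hsum0 0
    have hsumf : ∑ k, f i k = (n:ℝ)/2 * (if a = b then (1:ℝ) else 0)
        - (1/2) * ((if a = b then (1:ℝ) else 0)
          + (if a = 0 then -(p i 1) else p i 0) * (if b = 0 then -(p i 1) else p i 0)
          - p i a * p i b) := by
      rw [Finset.sum_congr rfl (fun k _ => hF k), Finset.sum_sub_distrib]
      congr 1
      · have hterm : ∀ k : Fin n, (1/2) * ((if a = b then (1:ℝ) else 0)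
            + (if a = 0 then -(p i 1) else p i 0) * (if b = 0 then -(p k 1) else p k 0)
            - p i a * p k b)
            = (1/2) * (if a = b then (1:ℝ) else 0)
              + ((1/2) * (if a = 0 then -(p i 1) else p i 0))
                  * (if b = 0 then -(p k 1) else p k 0)
              - ((1/2) * p i a) * p k b := by intro k; ring
        simp only [hterm]
        rw [Finset.sum_sub_distrib, Finset.sum_add_distrib, Finset.sum_const,
          ← Finset.mul_sum, ← Finset.mul_sum, hq, hsum0 b]
        simp [Finset.card_univ]
        ring
      · rw [Finset.sum_ite_eq' Finset.univ i]
        simp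
    rw [hfdiag i, hsumf, hdelta]
    ring
  · rw [if_neg hij]
    have hpne : p i ≠ p j := fun hpe => hij (hinj hpe)
    have hfij : f i j = (1/2) * ((if a = b then (1:ℝ) else 0)
        + (if a = 0 then -(p i 1) else p i 0) * (if b = 0 then -(p j 1) else p j 0)
        - p i a * p j b) := key_scalar p i j hpne (hunit i) (hunit j) a b
    rw [hfij]
    have : ¬(i = j ∧ a = b) := fun h => hij h.1
    rw [if_neg this, hdelta]
    ring
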